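/- Let n ≥ 1 be an integer, let Y be an n×n real symmetric positive definite matrix, let W be an n×n complex symmetric matrix, and let a ≥ 0 be a real number. If ‖Y^{1/2} W Y^{1/2}‖ ≤ a, then ‖W‖ ≤ a · tr(Y^{−1}), where ‖·‖ denotes the Frobenius norm ‖A‖ = (∑_{i,j} |a_{ij}|²)^{1/2}. -/

import Mathlib

/-- The Frobenius norm of a complex matrix. -/
noncomputable def frobNorm {n : ℕ} (A : Matrix (Fin n) (Fin n) ℂ) : ℝ :=
  Real.sqrt (∑ i, ∑ j, ‖A i j‖ ^ 2)

open scoped ComplexOrder in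
/-- The positive semidefinite square root of a positive semidefinite matrix
(the definition `Matrix.PosSemidef.sqrt` of the older Mathlib, since removed). -/
noncomputable def Matrix.PosSemidef.sqrt {n : Type*} [Fintype n] [DecidableEq n] {𝕜 : Type*}
    [RCLike 𝕜] {A : Matrix n n 𝕜} (hA : A.PosSemidef) : Matrix n n 𝕜 :=
  hA.1.eigenvectorUnitary.1 * Matrix.diagonal (((↑) : ℝ → 𝕜) ∘ (Real.sqrt ·) ∘ hA.1.eigenvalues) *
    (star hA.1.eigenvectorUnitary : Matrix n n 𝕜)

open scoped ComplexOrder in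
lemma Matrix.PosSemidef.sqrt_isHermitian' {n : Type*} [Fintype n] [DecidableEq n] {𝕜 : Type*}
    [RCLike 𝕜] {A : Matrix n n 𝕜} (hA : A.PosSemidef) : (Matrix.PosSemidef.sqrt hA).IsHermitian := by
  unfold Matrix.PosSemidef.sqrt Matrix.IsHermitian
  rw [Matrix.conjTranspose_mul, Matrix.conjTranspose_mul, Matrix.diagonal_conjTranspose]
  have hd : star (((↑) : ℝ → 𝕜) ∘ (Real.sqrt ·) ∘ hA.1.eigenvalues) =
      ((↑) : ℝ → 𝕜) ∘ (Real.sqrt ·) ∘ hA.1.eigenvalues := by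
    funext i; simp
  rw [hd, ← Matrix.star_eq_conjTranspose, ← Matrix.star_eq_conjTranspose, star_star,
    Matrix.star_eq_conjTranspose, mul_assoc]

open scoped ComplexOrder in
lemma Matrix.PosSemidef.sqrt_mul_self' {n : Type*} [Fintype n] [DecidableEq n] {𝕜 : Type*}
    [RCLike 𝕜] {A : Matrix n n 𝕜} (hA : A.PosSemidef) :
    Matrix.PosSemidef.sqrt hA * Matrix.PosSemidef.sqrt hA = A := by
  unfold Matrix.PosSemidef.sqrt
  conv_rhs => rw [hA.1.spectral_theorem, Unitary.conjStarAlgAut_apply]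
  have hU : (star hA.1.eigenvectorUnitary : Matrix n n 𝕜) * hA.1.eigenvectorUnitary.1 = 1 :=
    Unitary.star_mul_self_of_mem hA.1.eigenvectorUnitary.2
  have hD : Matrix.diagonal (((↑) : ℝ → 𝕜) ∘ (Real.sqrt ·) ∘ hA.1.eigenvalues) *
      Matrix.diagonal (((↑) : ℝ → 𝕜) ∘ (Real.sqrt ·) ∘ hA.1.eigenvalues) =
      Matrix.diagonal (RCLike.ofReal ∘ hA.1.eigenvalues) := by
    rw [Matrix.diagonal_mul_diagonal]
    congr 1
    funext i
    simp only [Function.comp_apply]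
    rw [← RCLike.ofReal_mul, Real.mul_self_sqrt (hA.eigenvalues_nonneg i)]
  calc _ = hA.1.eigenvectorUnitary.1 * Matrix.diagonal (((↑) : ℝ → 𝕜) ∘ (Real.sqrt ·) ∘ hA.1.eigenvalues) *
      ((star hA.1.eigenvectorUnitary : Matrix n n 𝕜) * hA.1.eigenvectorUnitary.1) *
      Matrix.diagonal (((↑) : ℝ → 𝕜) ∘ (Real.sqrt ·) ∘ hA.1.eigenvalues) *
      (star hA.1.eigenvectorUnitary : Matrix n n 𝕜) := by simp only [mul_assoc]
  _ = _ := by rw [hU, mul_one, mul_assoc _ (Matrix.diagonal _) (Matrix.diagonal _), hD]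

attribute [local instance] Matrix.frobeniusSeminormedAddCommGroup Matrix.frobeniusNormedRing

lemma frobNorm_eq {n : ℕ} (A : Matrix (Fin n) (Fin n) ℂ) : frobNorm A = ‖A‖ := by
  rw [Matrix.frobenius_norm_def, frobNorm, Real.sqrt_eq_rpow]
  congr 1
  refine Finset.sum_congr rfl fun i _ => Finset.sum_congr rfl fun j _ => ?_
  rw [show ((2:ℝ)) = ((2:ℕ):ℝ) by norm_num, Real.rpow_natCast]

theorem statement15 {n : ℕ} (hn : 1 ≤ n) (Y : Matrix (Fin n) (Fin n) ℝ)
    (hY : Y.PosDef) (W : Matrix (Fin n) (Fin n) ℂ) (hW : W.IsSymm)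
    (a : ℝ) (ha : 0 ≤ a)
    (h : frobNorm (((Matrix.PosSemidef.sqrt hY.posSemidef).map (fun x => (x : ℂ))) * W *
        ((Matrix.PosSemidef.sqrt hY.posSemidef).map (fun x => (x : ℂ)))) ≤ a) :
    frobNorm W ≤ a * (Y⁻¹).trace := by
  set S := Matrix.PosSemidef.sqrt hY.posSemidef with hS
  have hSherm : S.IsHermitian := Matrix.PosSemidef.sqrt_isHermitian' hY.posSemidef
  -- S is invertible
  have hSdet : IsUnit S.det := by
    have : (S * S).det = Y.det := by rw [Matrix.PosSemidef.sqrt_mul_self' hY.posSemidef]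
    have hYdet := hY.det_pos
    rw [Matrix.det_mul] at this
    refine isUnit_iff_ne_zero.mpr fun h0 => ?_
    rw [h0, mul_zero] at this
    exact hYdet.ne' this.symm
  have hinv : S⁻¹ * S = 1 := Matrix.nonsing_inv_mul S hSdet
  have hinv' : S * S⁻¹ = 1 := Matrix.mul_nonsing_inv S hSdet
  -- complex versions
  set Sc : Matrix (Fin n) (Fin n) ℂ := S.map (fun x => (x : ℂ)) with hSc
  set T : Matrix (Fin n) (Fin n) ℂ := (S⁻¹).map (fun x => (x : ℂ)) with hT
  have hmap : ∀ (A B : Matrix (Fin n) (Fin n) ℝ),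
      (A * B).map (fun x => (x : ℂ)) = A.map (fun x => (x : ℂ)) * B.map (fun x => (x : ℂ)) :=
    fun A B => by
      ext i j
      simp [Matrix.mul_apply, Matrix.map_apply]
  have hTSc : T * Sc = 1 := by
    rw [hT, hSc, ← hmap, hinv]
    simp [Matrix.map_one (f := Complex.ofReal)]
  have hScT : Sc * T = 1 := by
    rw [hT, hSc, ← hmap, hinv']
    simp [Matrix.map_one (f := Complex.ofReal)]
  have hWfact : W = T * (Sc * W * Sc) * T := by
    calc W = 1 * W * 1 := by rw [one_mul, mul_one]
    _ = (T * Sc) * W * (Sc * T) := by rw [hTSc, hScT]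
    _ = T * (Sc * W * Sc) * T := by noncomm_ring
  -- norm bound
  have hna : ‖Sc * W * Sc‖ ≤ a := by rw [← frobNorm_eq]; exact h
  have hTnn : (0:ℝ) ≤ ‖T‖ := norm_nonneg _
  have hbound : ‖W‖ ≤ ‖T‖ * a * ‖T‖ := by
    calc ‖W‖ = ‖T * (Sc * W * Sc) * T‖ := by rw [← hWfact]
    _ ≤ ‖T * (Sc * W * Sc)‖ * ‖T‖ := norm_mul_le _ _
    _ ≤ ‖T‖ * ‖Sc * W * Sc‖ * ‖T‖ := by
        exact mul_le_mul_of_nonneg_right (norm_mul_le _ _) hTnn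
    _ ≤ ‖T‖ * a * ‖T‖ := by
        exact mul_le_mul_of_nonneg_right (mul_le_mul_of_nonneg_left hna hTnn) hTnn
  -- compute ‖T‖^2 = trace Y⁻¹
  have hSinvSymm : (S⁻¹).IsHermitian := hSherm.inv
  have htrace : ‖T‖ ^ 2 = (Y⁻¹).trace := by
    have hTnorm : ‖T‖ = ‖S⁻¹‖ :=
      Matrix.frobenius_norm_map_eq (S⁻¹) _ (fun x => by simp)
    rw [hTnorm]
    have hYinv : Y⁻¹ = S⁻¹ * S⁻¹ := by
      rw [← Matrix.PosSemidef.sqrt_mul_self' hY.posSemidef, Matrix.mul_inv_rev]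
    rw [hYinv]
    rw [Matrix.frobenius_norm_def, ← Real.rpow_natCast _ 2, ← Real.rpow_mul (by positivity)]
    norm_num
    rw [Matrix.trace]
    refine Finset.sum_congr rfl fun i _ => ?_
    simp only [Matrix.diag_apply, Matrix.mul_apply]
    refine Finset.sum_congr rfl fun j _ => ?_
    rw [sq]
    congr 1
    have := hSinvSymm.apply j i
    simpa using this
  rw [frobNorm_eq]
  calc ‖W‖ ≤ ‖T‖ * a * ‖T‖ := hbound
  _ = a * ‖T‖ ^ 2 := by ring
  _ = a * (Y⁻¹).trace := by rw [htrace]
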